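/- There is an absolute constant C ≥ 1 such that for all finite sets A, D ⊂ ℝ, every integer N ≥ 1, and every real ω with |ω| ≥ 2, one has #{(a,b,d) ∈ A × (ω·[N]) × D : (a+b)(b+d) = 1} ≤ C √(|A||D|) · N · max{ |D|^{−1/2}, N^{−1/5} }. -/

import Mathlib

open Finset

set_option maxHeartbeats 1200000 in
theorem stmt13 :
    ∃ C : ℝ, 1 ≤ C ∧
      ∀ (A D : Finset ℝ) (N : ℕ), 1 ≤ N → ∀ ω : ℝ, 2 ≤ |ω| →
        (((((A ×ˢ ((Finset.range N).image fun i : ℕ => ω * (i + 1))) ×ˢ D).filter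
              fun t => (t.1.1 + t.1.2) * (t.1.2 + t.2) = 1).card : ℝ)) ≤
          C * Real.sqrt ((A.card : ℝ) * D.card) * N *
            max ((D.card : ℝ) ^ (-(1 : ℝ) / 2)) ((N : ℝ) ^ (-(1 : ℝ) / 5)) := by
  refine ⟨3, by norm_num, ?_⟩
  intro A D N hN ω hω
  set B : Finset ℝ := (Finset.range N).image fun i : ℕ => ω * (i + 1) with hB
  set S : Finset ((ℝ × ℝ) × ℝ) :=
    ((A ×ˢ B) ×ˢ D).filter fun t => (t.1.1 + t.1.2) * (t.1.2 + t.2) = 1 with hS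
  clear_value B S
  classical
  -- spacing of B
  have hspace : ∀ b ∈ B, ∀ b' ∈ B, b ≠ b' → 2 ≤ |b - b'| := by
    intro b hb b' hb' hne
    rw [hB, Finset.mem_image] at hb hb'
    obtain ⟨i, _, rfl⟩ := hb
    obtain ⟨j, _, rfl⟩ := hb'
    have hij : i ≠ j := by rintro rfl; exact hne rfl
    have h1 : (1:ℝ) ≤ |(i:ℝ) - (j:ℝ)| := by
      have h : (1:ℤ) ≤ |(i:ℤ) - (j:ℤ)| := by
        refine Int.one_le_abs ?_
        exact sub_ne_zero.mpr (by exact_mod_cast hij)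
      exact_mod_cast h
    have heq : ω * (i + 1) - ω * (j + 1) = ω * ((i:ℝ) - j) := by ring
    rw [heq, abs_mul]
    nlinarith [abs_nonneg ω]
  -- at most two points of B in an interval of length 2
  have hsmall : ∀ c : ℝ, (B.filter fun b => |c + b| ≤ 1).card ≤ 2 := by
    intro c
    by_contra h
    push_neg at h
    obtain ⟨b₁, b₂, b₃, h1, h2, h3, h12, h13, h23⟩ := Finset.two_lt_card_iff.mp h
    simp only [Finset.mem_filter] at h1 h2 h3
    have d12 := hspace _ h1.1 _ h2.1 h12
    have d13 := hspace _ h1.1 _ h3.1 h13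
    have d23 := hspace _ h2.1 _ h3.1 h23
    have a1 := abs_le.mp h1.2
    have a2 := abs_le.mp h2.2
    have a3 := abs_le.mp h3.2
    rcases le_abs.mp d12 with h|h <;> rcases le_abs.mp d13 with h'|h' <;>
      rcases le_abs.mp d23 with h''|h'' <;>
      linarith [a1.1, a1.2, a2.1, a2.2, a3.1, a3.2]
  -- uniqueness lemmas
  have hd_unique : ∀ p q x y : ℝ, (p+q)*(q+x) = 1 → (p+q)*(q+y) = 1 → x = y := by
    intro p q x y e1 e2
    have hpq : p + q ≠ 0 := by
      intro h; rw [h, zero_mul] at e1; exact one_ne_zero e1.symm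
    have := mul_left_cancel₀ hpq (e1.trans e2.symm)
    linarith
  have ha_unique : ∀ x y q r : ℝ, (x+q)*(q+r) = 1 → (y+q)*(q+r) = 1 → x = y := by
    intro x y q r e1 e2
    have hqr : q + r ≠ 0 := by
      intro h; rw [h, mul_zero] at e1; exact one_ne_zero e1.symm
    have := mul_right_cancel₀ hqr (e1.trans e2.symm)
    linarith
  have hmem : ∀ t ∈ S, t.1.1 ∈ A ∧ t.1.2 ∈ B ∧ t.2 ∈ D ∧
      (t.1.1 + t.1.2) * (t.1.2 + t.2) = 1 := by
    intro t ht
    rw [hS, Finset.mem_filter, Finset.mem_product, Finset.mem_product] at ht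
    exact ⟨ht.1.1.1, ht.1.1.2, ht.1.2, ht.2⟩
  have hBcard : B.card ≤ N := by
    rw [hB]; exact le_trans Finset.card_image_le (by simp)
  -- global bounds
  have hSD : S.card ≤ N * D.card := by
    calc S.card ≤ (B ×ˢ D).card := by
          refine Finset.card_le_card_of_injOn (fun t => (t.1.2, t.2)) ?_ ?_
          · intro t ht
            obtain ⟨_, hb, hd, _⟩ := hmem t ht
            exact Finset.mem_product.mpr ⟨hb, hd⟩
          · intro t ht t' ht' hE
            simp only [Finset.mem_coe] at ht ht'
            have hE' : (t.1.2, t.2) = (t'.1.2, t'.2) := hE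
            obtain ⟨hb, hd⟩ := Prod.mk.inj hE'
            have e1 := (hmem t ht).2.2.2
            have e2 := (hmem t' ht').2.2.2
            rw [← hb, ← hd] at e2
            have ha : t.1.1 = t'.1.1 := ha_unique _ _ _ _ e1 e2
            exact Prod.ext (Prod.ext ha hb) hd
      _ = B.card * D.card := Finset.card_product _ _
      _ ≤ N * D.card := Nat.mul_le_mul_right _ hBcard
  have hSA : S.card ≤ A.card * N := by
    calc S.card ≤ (A ×ˢ B).card := by
          refine Finset.card_le_card_of_injOn (fun t => (t.1.1, t.1.2)) ?_ ?_
          · intro t ht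
            obtain ⟨ha, hb, _, _⟩ := hmem t ht
            exact Finset.mem_product.mpr ⟨ha, hb⟩
          · intro t ht t' ht' hE
            simp only [Finset.mem_coe] at ht ht'
            have hE' : (t.1.1, t.1.2) = (t'.1.1, t'.1.2) := hE
            obtain ⟨ha, hb⟩ := Prod.mk.inj hE'
            have e1 := (hmem t ht).2.2.2
            have e2 := (hmem t' ht').2.2.2
            rw [← ha, ← hb] at e2
            have hd : t.2 = t'.2 := hd_unique _ _ _ _ e1 e2
            exact Prod.ext (Prod.ext ha hb) hd
      _ = A.card * B.card := Finset.card_product _ _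
      _ ≤ A.card * N := Nat.mul_le_mul_left _ hBcard
  -- split
  set S₁ : Finset ((ℝ × ℝ) × ℝ) := S.filter (fun t => |t.1.1 + t.1.2| ≤ 1) with hS₁
  set S₂ : Finset ((ℝ × ℝ) × ℝ) := S.filter (fun t => ¬ |t.1.1 + t.1.2| ≤ 1) with hS₂
  clear_value S₁ S₂
  have hsum : S₁.card + S₂.card = S.card := by
    rw [hS₁, hS₂]
    exact Finset.card_filter_add_card_filter_not _
  have hc1 : S₁.card ≤ 2 * A.card := by
    refine Finset.card_le_mul_card_image_of_maps_to (f := fun t => t.1.1) (t := A) ?_ 2 ?_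
    · intro t ht
      rw [hS₁, Finset.mem_filter] at ht
      exact (hmem t ht.1).1
    · intro a _
      refine le_trans (Finset.card_le_card_of_injOn (fun t => t.1.2) ?_ ?_) (hsmall a)
      · intro t ht
        rw [Finset.mem_coe, Finset.mem_filter, hS₁, Finset.mem_filter] at ht
        obtain ⟨⟨htS, habs⟩, hta⟩ := ht
        refine Finset.mem_filter.mpr ⟨(hmem t htS).2.1, ?_⟩
        rw [← hta]; exact habs
      · intro t ht t' ht' hbb
        have hbb' : t.1.2 = t'.1.2 := hbb
        simp only [Finset.mem_coe, Finset.mem_filter, hS₁] at ht ht'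
        have ha : t.1.1 = t'.1.1 := ht.2.trans ht'.2.symm
        have e1 := (hmem t ht.1.1).2.2.2
        have e2 := (hmem t' ht'.1.1).2.2.2
        rw [← ha, ← hbb'] at e2
        have hd : t.2 = t'.2 := hd_unique _ _ _ _ e1 e2
        exact Prod.ext (Prod.ext ha hbb') hd
  have hc2 : S₂.card ≤ 2 * D.card := by
    refine Finset.card_le_mul_card_image_of_maps_to (f := fun t => t.2) (t := D) ?_ 2 ?_
    · intro t ht
      rw [hS₂, Finset.mem_filter] at ht
      exact (hmem t ht.1).2.2.1
    · intro d _
      refine le_trans (Finset.card_le_card_of_injOn (fun t => t.1.2) ?_ ?_) (hsmall d)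
      · intro t ht
        rw [Finset.mem_coe, Finset.mem_filter, hS₂, Finset.mem_filter] at ht
        obtain ⟨⟨htS, habs⟩, htd⟩ := ht
        refine Finset.mem_filter.mpr ⟨(hmem t htS).2.1, ?_⟩
        have heq := (hmem t htS).2.2.2
        have hprod : |t.1.1 + t.1.2| * |t.1.2 + t.2| = 1 := by
          rw [← abs_mul, heq]; exact abs_one
        have hgt : 1 < |t.1.1 + t.1.2| := not_le.mp habs
        have hle : |t.1.2 + t.2| ≤ 1 := by
          nlinarith [abs_nonneg (t.1.2 + t.2)]
        rw [add_comm, ← htd]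
        exact hle
      · intro t ht t' ht' hbb
        have hbb' : t.1.2 = t'.1.2 := hbb
        simp only [Finset.mem_coe, Finset.mem_filter, hS₂] at ht ht'
        have hd : t.2 = t'.2 := ht.2.trans ht'.2.symm
        have e1 := (hmem t ht.1.1).2.2.2
        have e2 := (hmem t' ht'.1.1).2.2.2
        rw [← hd, ← hbb'] at e2
        have ha : t.1.1 = t'.1.1 := ha_unique _ _ _ _ e1 e2
        exact Prod.ext (Prod.ext ha hbb') hd
  have hc1' : S₁.card ≤ N * D.card :=
    le_trans (Finset.card_le_card (by rw [hS₁]; exact Finset.filter_subset _ _)) hSD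
  have hc2' : S₂.card ≤ A.card * N :=
    le_trans (Finset.card_le_card (by rw [hS₂]; exact Finset.filter_subset _ _)) hSA
  -- real arithmetic
  have hz1 : (1:ℝ) ≤ (N : ℝ) := by exact_mod_cast hN
  have hz0 : (0:ℝ) < (N : ℝ) := lt_of_lt_of_le one_pos hz1
  have hx0 : (0:ℝ) ≤ (A.card : ℝ) := Nat.cast_nonneg _
  have hy0 : (0:ℝ) ≤ (D.card : ℝ) := Nat.cast_nonneg _
  have r1a : (S₁.card : ℝ) ≤ 2 * (A.card : ℝ) := by exact_mod_cast hc1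
  have r1b : (S₁.card : ℝ) ≤ (N : ℝ) * (D.card : ℝ) := by exact_mod_cast hc1'
  have r2a : (S₂.card : ℝ) ≤ 2 * (D.card : ℝ) := by exact_mod_cast hc2
  have r2b : (S₂.card : ℝ) ≤ (A.card : ℝ) * (N : ℝ) := by exact_mod_cast hc2'
  have r10 : (0:ℝ) ≤ (S₁.card : ℝ) := Nat.cast_nonneg _
  have r20 : (0:ℝ) ≤ (S₂.card : ℝ) := Nat.cast_nonneg _
  have hsq1 : (S₁.card : ℝ) ≤ Real.sqrt (2 * ((A.card : ℝ)*(D.card : ℝ)) * (N : ℝ)) := by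
    have h2 : ((S₁.card : ℝ))^2 ≤ 2 * ((A.card : ℝ)*(D.card : ℝ)) * (N : ℝ) := by nlinarith
    calc (S₁.card : ℝ) = Real.sqrt (((S₁.card : ℝ))^2) := (Real.sqrt_sq r10).symm
      _ ≤ Real.sqrt (2 * ((A.card : ℝ)*(D.card : ℝ)) * (N : ℝ)) := Real.sqrt_le_sqrt h2
  have hsq2 : (S₂.card : ℝ) ≤ Real.sqrt (2 * ((A.card : ℝ)*(D.card : ℝ)) * (N : ℝ)) := by
    have h2 : ((S₂.card : ℝ))^2 ≤ 2 * ((A.card : ℝ)*(D.card : ℝ)) * (N : ℝ) := by nlinarith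
    calc (S₂.card : ℝ) = Real.sqrt (((S₂.card : ℝ))^2) := (Real.sqrt_sq r20).symm
      _ ≤ Real.sqrt (2 * ((A.card : ℝ)*(D.card : ℝ)) * (N : ℝ)) := Real.sqrt_le_sqrt h2
  have hsplit : Real.sqrt (2 * ((A.card : ℝ)*(D.card : ℝ)) * (N : ℝ)) = Real.sqrt 2 * Real.sqrt ((A.card : ℝ)*(D.card : ℝ)) * Real.sqrt (N : ℝ) := by
    rw [Real.sqrt_mul (by have := Nat.cast_nonneg (α := ℝ) A.card; have := Nat.cast_nonneg (α := ℝ) D.card; nlinarith : (0:ℝ) ≤ 2 * ((A.card : ℝ)*(D.card : ℝ))),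
        Real.sqrt_mul (by norm_num : (0:ℝ) ≤ 2)]
  have hsqrt2 : Real.sqrt 2 ≤ 3/2 := by
    have h := Real.sqrt_le_sqrt (show (2:ℝ) ≤ (3/2)^2 by norm_num)
    rwa [Real.sqrt_sq (by norm_num : (0:ℝ) ≤ 3/2)] at h
  set M : ℝ := max ((D.card : ℝ) ^ (-(1:ℝ) / 2)) ((N : ℝ) ^ (-(1:ℝ) / 5)) with hM
  have hzM : Real.sqrt (N : ℝ) ≤ (N : ℝ) * M := by
    have h45 : Real.sqrt (N : ℝ) ≤ (N : ℝ) ^ ((4:ℝ)/5) := by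
      rw [Real.sqrt_eq_rpow]
      exact Real.rpow_le_rpow_of_exponent_le hz1 (by norm_num)
    have hmul : (N : ℝ) ^ ((4:ℝ)/5) = (N : ℝ) * (N : ℝ) ^ (-(1:ℝ)/5) := by
      calc (N : ℝ) ^ ((4:ℝ)/5) = (N : ℝ) ^ ((1:ℝ) + (-(1:ℝ)/5)) := by norm_num
        _ = (N : ℝ) ^ (1:ℝ) * (N : ℝ) ^ (-(1:ℝ)/5) := Real.rpow_add hz0 _ _
        _ = (N : ℝ) * (N : ℝ) ^ (-(1:ℝ)/5) := by rw [Real.rpow_one]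
    calc Real.sqrt (N : ℝ) ≤ (N : ℝ) ^ ((4:ℝ)/5) := h45
      _ = (N : ℝ) * (N : ℝ) ^ (-(1:ℝ)/5) := hmul
      _ ≤ (N : ℝ) * M := by
          refine mul_le_mul_of_nonneg_left ?_ (le_of_lt hz0)
          rw [hM]; exact le_max_right _ _
  have hfinal : (S.card : ℝ) ≤ 3 * Real.sqrt ((A.card : ℝ)*(D.card : ℝ)) * (N : ℝ) * M := by
    have hcs : (S.card : ℝ) = (S₁.card : ℝ) + (S₂.card : ℝ) := by
      rw [← hsum]; push_cast; ring
    calc (S.card : ℝ) = (S₁.card : ℝ) + (S₂.card : ℝ) := hcs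
      _ ≤ 2 * Real.sqrt (2 * ((A.card : ℝ)*(D.card : ℝ)) * (N : ℝ)) := by linarith
      _ = 2 * (Real.sqrt 2 * Real.sqrt ((A.card : ℝ)*(D.card : ℝ)) * Real.sqrt (N : ℝ)) := by rw [hsplit]
      _ ≤ 3 * (Real.sqrt ((A.card : ℝ)*(D.card : ℝ)) * Real.sqrt (N : ℝ)) := by
          nlinarith [Real.sqrt_nonneg ((A.card : ℝ)*(D.card : ℝ)), Real.sqrt_nonneg (N : ℝ),
            mul_nonneg (Real.sqrt_nonneg ((A.card : ℝ)*(D.card : ℝ))) (Real.sqrt_nonneg (N : ℝ))]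
      _ ≤ 3 * (Real.sqrt ((A.card : ℝ)*(D.card : ℝ)) * ((N : ℝ) * M)) := by
          refine mul_le_mul_of_nonneg_left ?_ (by norm_num)
          exact mul_le_mul_of_nonneg_left hzM (Real.sqrt_nonneg _)
      _ = 3 * Real.sqrt ((A.card : ℝ)*(D.card : ℝ)) * (N : ℝ) * M := by ring
  exact hfinal
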